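/- For every natural number n, h_n(x,s) = Σ_{j=0}^{⌊n/2⌋} (q^{j²} s^j / ((1+q)^j · [j]_{q²}!)) · D_q^{2j} x^n, i.e. h_n(x,s) is obtained by applying the q²-exponential series E_{q²}(q s D_q² / [2]_q) to x^n, where E_q(z) = Σ_{k≥0} q^{C(k,2)} z^k / [k]_q!. -/

import Mathlib

noncomputable section

/-- The field `ℚ(q,s)` of rational functions in two indeterminates. -/
abbrev F : Type := FractionRing (MvPolynomial (Fin 2) ℚ)

/-- The indeterminate `q`. -/
def q : F := algebraMap (MvPolynomial (Fin 2) ℚ) F (MvPolynomial.X 0)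

/-- The indeterminate `s`. -/
def s : F := algebraMap (MvPolynomial (Fin 2) ℚ) F (MvPolynomial.X 1)

/-- The q-integer `[n]_q = 1 + q + ⋯ + q^{n-1}`. -/
def qInt (n : ℕ) : F := ∑ i ∈ Finset.range n, q ^ i

/-- The q-factorial `[n]_q! = ∏_{k=1}^n [k]_q`. -/
def qFact (n : ℕ) : F := ∏ k ∈ Finset.range n, qInt (k + 1)

/-- The q-binomial coefficient `[n choose k]_q = [n]_q!/([k]_q! [n-k]_q!)`. -/
def qBinom (n k : ℕ) : F := qFact n / (qFact k * qFact (n - k))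

/-- The operator `X` of multiplication by `x` on `F[x]`. -/
def Xop : Module.End F (Polynomial F) := LinearMap.mulLeft F Polynomial.X

/-- Division by `x` (discarding the constant term), as a linear map. -/
def divXL : Polynomial F →ₗ[F] Polynomial F where
  toFun := Polynomial.divX
  map_add' p r := Polynomial.divX_add
  map_smul' a p := by
    ext n
    simp [Polynomial.coeff_divX, Polynomial.coeff_smul]

/-- The q-derivative `D_q f(x) = (f(qx) - f(x))/((q-1)x)`; it is the F-linear
operator on `F[x]` determined by `D_q x^n = [n]_q x^{n-1}`. -/
def Dq : Module.End F (Polynomial F) :=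
  (q - 1)⁻¹ •
    (divXL ∘ₗ
      ((Polynomial.aeval (Polynomial.C q * Polynomial.X)).toLinearMap - LinearMap.id))

/-- The polynomials `h_n(x,t) = Σ_j q^{j²} t^j [n]_q!/((1+q)⋯(1+q^j)·[j]_q!·[n-2j]_q!)
x^{n-2j}` (the parameter `t` will be specialized to `s` or `q²s`). -/
def h (t : F) (n : ℕ) : Polynomial F :=
  ∑ j ∈ Finset.range (n / 2 + 1),
    Polynomial.C (q ^ (j ^ 2) * t ^ j * qFact n /
        ((∏ i ∈ Finset.range j, (1 + q ^ (i + 1))) * qFact j * qFact (n - 2 * j))) *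
      Polynomial.X ^ (n - 2 * j)


/-- The q²-factorial `[j]_{q²}! = ∏_{k=1}^j [k]_{q²}`. -/
def q2Fact (j : ℕ) : F := ∏ k ∈ Finset.range j, ∑ i ∈ Finset.range (k + 1), (q ^ 2) ^ i

-- injectivity
lemma phi_inj : Function.Injective (algebraMap (MvPolynomial (Fin 2) ℚ) F) :=
  IsFractionRing.injective _ _

lemma phi_ne_zero {p : MvPolynomial (Fin 2) ℚ} (hp : p ≠ 0) :
    algebraMap (MvPolynomial (Fin 2) ℚ) F p ≠ 0 := by
  simpa using (map_ne_zero_iff _ phi_inj).mpr hp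

lemma hq1 : q - 1 ≠ 0 := by
  have : (MvPolynomial.X 0 - 1 : MvPolynomial (Fin 2) ℚ) ≠ 0 := by
    intro h
    have := congrArg MvPolynomial.constantCoeff h
    simp at this
  simpa [q, map_sub] using phi_ne_zero this

lemma hqpow_add_one (k : ℕ) (hk : 1 ≤ k) : (1 : F) + q ^ k ≠ 0 := by
  have : ((1 : MvPolynomial (Fin 2) ℚ) + MvPolynomial.X 0 ^ k) ≠ 0 := by
    intro h
    have := congrArg MvPolynomial.constantCoeff h
    simp [MvPolynomial.constantCoeff_X, zero_pow (by omega : k ≠ 0)] at this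
  simpa [q, map_add, map_pow] using phi_ne_zero this

lemma hq_add_one : (1 : F) + q ≠ 0 := by simpa using hqpow_add_one 1 le_rfl

lemma geom (m : ℕ) : qInt m * (q - 1) = q ^ m - 1 := geom_sum_mul q m

lemma qpow_sub_one_ne (m : ℕ) (hm : 1 ≤ m) : (q : F) ^ m - 1 ≠ 0 := by
  have : (MvPolynomial.X 0 ^ m - 1 : MvPolynomial (Fin 2) ℚ) ≠ 0 := by
    intro h
    have := congrArg MvPolynomial.constantCoeff h
    simp [MvPolynomial.constantCoeff_X, zero_pow (by omega : m ≠ 0)] at this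
  simpa [q, map_sub, map_pow] using phi_ne_zero this

lemma qInt_ne_zero (m : ℕ) (hm : 1 ≤ m) : qInt m ≠ 0 := by
  intro h
  have := geom m
  rw [h, zero_mul] at this
  exact qpow_sub_one_ne m hm this.symm

lemma qFact_ne_zero (n : ℕ) : qFact n ≠ 0 := by
  apply Finset.prod_ne_zero_iff.mpr
  intro k _
  exact qInt_ne_zero (k + 1) (by omega)

lemma q2sum_ne_zero (k : ℕ) : (∑ i ∈ Finset.range (k + 1), (q ^ 2) ^ i) ≠ 0 := by
  intro h
  have h2 : (q^2)^(k+1) - 1 = 0 := by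
    have := geom_sum_mul (q^2) (k+1)
    rw [h, zero_mul] at this
    exact this.symm
  rw [← pow_mul] at h2
  exact qpow_sub_one_ne (2 * (k+1)) (by omega) h2

lemma q2Fact_ne_zero (j : ℕ) : q2Fact j ≠ 0 := by
  apply Finset.prod_ne_zero_iff.mpr
  intro k _
  exact q2sum_ne_zero k

-- key identity: (1+q^m) [m]_q = (1+q) [m]_{q^2}
lemma key (m : ℕ) : (1 + q ^ m) * qInt m = (1 + q) * ∑ i ∈ Finset.range m, (q ^ 2) ^ i := by
  have hA := geom m
  have hB := geom_sum_mul (q ^ 2) m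
  have hne : (q : F) ^ 2 - 1 ≠ 0 := qpow_sub_one_ne 2 (by omega)
  apply mul_right_cancel₀ hne
  have hpow : ((q : F) ^ 2) ^ m = (q ^ m) ^ 2 := by ring
  linear_combination (1 + q ^ m) * (q + 1) * hA - (1 + q) * hB - (q + 1) * hpow

-- prod identity
lemma prod_key (j : ℕ) :
    (∏ i ∈ Finset.range j, (1 + q ^ (i + 1))) * qFact j = (1 + q) ^ j * q2Fact j := by
  induction j with
  | zero => simp [qFact, q2Fact]
  | succ k ih =>
    rw [Finset.prod_range_succ, qFact, Finset.prod_range_succ, ← qFact,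
      q2Fact, Finset.prod_range_succ, ← q2Fact]
    linear_combination qInt (k + 1) * (1 + q ^ (k + 1)) * ih +
      (1 + q) ^ k * q2Fact k * key (k + 1)

lemma Dq_X_pow (m : ℕ) : Dq ((Polynomial.X : Polynomial F) ^ m) = qInt m • Polynomial.X ^ (m - 1) := by
  have h0 : Dq ((Polynomial.X : Polynomial F) ^ m) =
      (q - 1)⁻¹ • Polynomial.divX ((Polynomial.C q * Polynomial.X) ^ m - Polynomial.X ^ m) := by
    simp [Dq, divXL, LinearMap.smul_apply, LinearMap.comp_apply, LinearMap.sub_apply]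
  rw [h0, mul_pow, ← Polynomial.C_pow]
  have h1 : (Polynomial.C (q ^ m)) * Polynomial.X ^ m - Polynomial.X ^ m
      = Polynomial.C (q ^ m - 1) * Polynomial.X ^ m := by
    rw [Polynomial.C_sub, Polynomial.C_1, sub_mul, one_mul]
  rw [h1, Polynomial.divX_C_mul, Polynomial.divX_X_pow]
  cases m with
  | zero => simp [qInt]
  | succ k =>
    simp only [Nat.succ_ne_zero, if_false]
    rw [Polynomial.smul_eq_C_mul, Polynomial.smul_eq_C_mul, ← mul_assoc, ← Polynomial.C_mul]
    congr 2
    rw [inv_mul_eq_div, div_eq_iff hq1]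
    linear_combination -geom (k + 1)

lemma Dq_pow_X_pow (n k : ℕ) (hk : k ≤ n) :
    (Dq ^ k) ((Polynomial.X : Polynomial F) ^ n) = (qFact n / qFact (n - k)) • Polynomial.X ^ (n - k) := by
  induction k with
  | zero => simp [div_self (qFact_ne_zero n)]
  | succ m ih =>
    have hm : m ≤ n := by omega
    rw [pow_succ', Module.End.mul_apply, ih hm, map_smul, Dq_X_pow, smul_smul]
    have h1 : n - m - 1 = n - (m + 1) := by omega
    rw [h1]
    congr 1
    have h2 : n - m = (n - (m + 1)) + 1 := by omega
    have h3 : qFact (n - (m + 1) + 1) = qFact (n - (m + 1)) * qInt (n - (m + 1) + 1) := by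
      rw [qFact, Finset.prod_range_succ, ← qFact]
    have hne2 := qFact_ne_zero (n - (m + 1))
    have hne3 := qInt_ne_zero (n - (m + 1) + 1) (by omega)
    rw [h2, h3]
    field_simp


/- STATEMENT 5: h_n(x,s) = Σ_{j=0}^{⌊n/2⌋} (q^{j²} s^j/((1+q)^j [j]_{q²}!)) D_q^{2j} x^n,
i.e. h_n(x,s) = E_{q²}(q s D_q²/[2]_q) x^n. -/
theorem h_eq_qExp_apply (n : ℕ) :
    h s n =
      ∑ j ∈ Finset.range (n / 2 + 1),
        (q ^ (j ^ 2) * s ^ j / ((1 + q) ^ j * q2Fact j)) •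
          (Dq ^ (2 * j)) (Polynomial.X ^ n) := by
  unfold h
  refine Finset.sum_congr rfl fun j hj => ?_
  have hj2 : 2 * j ≤ n := by
    have := Finset.mem_range.mp hj
    omega
  rw [Dq_pow_X_pow n (2 * j) hj2, smul_smul, Polynomial.smul_eq_C_mul]
  congr 1
  rw [div_mul_div_comm, ← prod_key]

end
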